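/- There exists a depth-2 QAC circuit on 4 qubits (n = 3 input qubits, m = 0 ancillas) that computes the parity function ⊕_3, i.e., for every x ∈ {0,1}^3 there exists a unit vector φ_x ∈ ℂ^({0,1}^3) such that C(|0⟩⊗|x⟩) = |⊕x⟩⊗φ_x. -/
import Mathlib


open scoped BigOperators

/-- The state space of `N` qubits: amplitudes indexed by bit strings of length `N`. -/
abbrev QState (N : ℕ) := (Fin N → Bool) → ℂ

/-- A unit vector (state vector): Euclidean norm 1. -/
def UnitVec {N : ℕ} (ψ : QState N) : Prop := ∑ x, ‖ψ x‖ ^ 2 = 1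

/-- The C-SIGN gate on the qubits in `S`: flips the sign of the amplitude exactly
when all bits in `S` are `1`. -/
noncomputable def czGate {N : ℕ} (S : Finset (Fin N)) (ψ : QState N) : QState N :=
  fun x => if ∀ i ∈ S, x i = true then -ψ x else ψ x

/-- A layer of C-SIGN gates on pairwise disjoint sets of qubits, applied in sequence. -/
noncomputable def czLayerAct {N : ℕ} (gs : List (Finset (Fin N))) (ψ : QState N) : QState N :=
  gs.foldr czGate ψ

/-- Interpret a `Bool` as an index into a `2 × 2` matrix. -/
def bitIdx (b : Bool) : Fin 2 := if b then 1 else 0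

/-- A layer of single-qubit gates, one `2 × 2` matrix per qubit, acting on the register. -/
noncomputable def layerAct {N : ℕ} (U : Fin N → Matrix (Fin 2) (Fin 2) ℂ) (ψ : QState N) :
    QState N :=
  fun x => ∑ y : Fin N → Bool, (∏ j, U j (bitIdx (x j)) (bitIdx (y j))) * ψ y

/-- A depth-`d` QAC circuit on `N` qubits: `d + 1` single-qubit layers
`L 0, …, L d` interleaved with `d` CZ layers `Z 0, …, Z (d-1)`;
the circuit is `L d ∘ Z (d-1) ∘ L (d-1) ∘ ⋯ ∘ Z 0 ∘ L 0`. -/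
structure QAC (N d : ℕ) where
  /-- the single-qubit layers (a `2 × 2` unitary for each qubit) -/
  L : Fin (d + 1) → Fin N → Matrix (Fin 2) (Fin 2) ℂ
  hL : ∀ i j, L i j ∈ Matrix.unitaryGroup (Fin 2) ℂ
  /-- the CZ layers: each is a list of pairwise disjoint sets of qubits -/
  Z : Fin d → List (Finset (Fin N))
  hZ : ∀ i, (Z i).Pairwise (fun S T => Disjoint S T)

/-- The action of a QAC circuit on a state. -/
noncomputable def QAC.act {N d : ℕ} (C : QAC N d) (ψ : QState N) : QState N :=
  layerAct (C.L (Fin.last d))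
    ((List.finRange d).foldl
      (fun φ i => czLayerAct (C.Z i) (layerAct (C.L i.castSucc) φ)) ψ)

/-- The target qubit (qubit `0`) in a register of `1 + n + m` qubits. -/
def tgt (n m : ℕ) : Fin (1 + n + m) := ⟨0, by omega⟩

/-- The `i`-th input qubit (qubit `1 + i`). -/
def inp (n m : ℕ) (i : Fin n) : Fin (1 + n + m) := ⟨1 + i.1, by have := i.2; omega⟩

/-- The `j`-th ancilla qubit (qubit `1 + n + j`). -/
def anc (n m : ℕ) (j : Fin m) : Fin (1 + n + m) := ⟨1 + n + j.1, by have := j.2; omega⟩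

/-- The `j`-th non-target qubit (qubit `1 + j`). -/
def nontgt (n m : ℕ) (j : Fin (n + m)) : Fin (1 + n + m) := ⟨1 + j.1, by have := j.2; omega⟩

/-- The set of input qubits. -/
def inputs (n m : ℕ) : Finset (Fin (1 + n + m)) := Finset.univ.image (inp n m)

/-- The parity (mod-2 bit-sum) of a bit string, as a `Bool`. -/
def parityB {n : ℕ} (x : Fin n → Bool) : Bool :=
  decide ((∑ i, if x i then 1 else 0 : ℕ) % 2 = 1)

/-- The state `|t⟩ ⊗ |x⟩ ⊗ α` of the register. -/
noncomputable def inState (n m : ℕ) (t : Bool) (x : Fin n → Bool) (α : QState m) :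
    QState (1 + n + m) :=
  fun y => (if y (tgt n m) = t ∧ (∀ i, y (inp n m i) = x i) then (1 : ℂ) else 0) *
    α (fun j => y (anc n m j))

/-- `C` `α`-computes `⊕ₙ`: for each classical input `x`, the circuit maps
`|0⟩ ⊗ |x⟩ ⊗ α` to `|⊕x⟩ ⊗ φₓ` for some unit vector `φₓ` of the non-target qubits. -/
noncomputable def AlphaComputes (n m : ℕ) {d : ℕ} (C : QAC (1 + n + m) d) (α : QState m) :
    Prop :=
  ∀ x : Fin n → Bool, ∃ φ : QState (n + m), UnitVec φ ∧
    ∀ y : Fin (1 + n + m) → Bool,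
      C.act (inState n m false x α) y =
        (if y (tgt n m) = parityB x then (1 : ℂ) else 0) * φ (fun j => y (nontgt n m j))

/-- `C` weakly computes `⊕ₙ`: it `α`-computes `⊕ₙ` for some unit ancilla state `α`. -/
noncomputable def WeaklyComputes (n m : ℕ) {d : ℕ} (C : QAC (1 + n + m) d) : Prop :=
  ∃ α : QState m, UnitVec α ∧ AlphaComputes n m C α

/-- The all-zeros computational basis state of the ancillas. -/
noncomputable def zeroAnc (m : ℕ) : QState m :=
  fun z => if z = (fun _ => false) then 1 else 0

/-- `C` computes `⊕ₙ`: it `α`-computes `⊕ₙ` with the all-zeros ancilla state. -/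
noncomputable def Computes (n m : ℕ) {d : ℕ} (C : QAC (1 + n + m) d) : Prop :=
  AlphaComputes n m C (zeroAnc m)

/-- A `2 × 2` matrix is semiclassical if it has two zero entries. -/
def Semiclassical (U : Matrix (Fin 2) (Fin 2) ℂ) : Prop :=
  ∃ p q : Fin 2 × Fin 2, p ≠ q ∧ U p.1 p.2 = 0 ∧ U q.1 q.2 = 0


noncomputable def cc : ℝ := (Real.sqrt 2)⁻¹
lemma hccR : cc * cc = 1/2 := by
  rw [cc, ← mul_inv, Real.mul_self_sqrt (by norm_num : (0:ℝ) ≤ 2)]; norm_num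
lemma hcc : (cc:ℂ) * cc = 1/2 := by
  calc (cc:ℂ)*cc = ((cc*cc : ℝ) : ℂ) := by push_cast; ring
  _ = 1/2 := by rw [hccR]; norm_num
lemma hcc2 : (cc:ℂ)^2 = 1/2 := by rw [sq]; exact hcc
noncomputable def Hm : Matrix (Fin 2) (Fin 2) ℂ := !![(cc:ℂ), cc; cc, -cc]
lemma Hm_unitary : Hm ∈ Matrix.unitaryGroup (Fin 2) ℂ := by
  rw [Matrix.mem_unitaryGroup_iff]
  ext i j
  fin_cases i <;> fin_cases j <;>
    simp [Hm, Matrix.mul_apply, Fin.sum_univ_two, Matrix.star_apply, Complex.star_def] <;>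
    linear_combination (2:ℂ) * hcc

lemma sum_pi4 {M : Type*} [AddCommMonoid M] (f : (Fin 4 → Bool) → M) :
    ∑ y, f y = ∑ p : Bool × Bool × Bool × Bool, f ![p.1, p.2.1, p.2.2.1, p.2.2.2] :=
  (Fintype.sum_bijective (fun p : Bool × Bool × Bool × Bool => ![p.1, p.2.1, p.2.2.1, p.2.2.2])
    (by decide) _ _ (fun _ => rfl)).symm
lemma sum_pi3 {M : Type*} [AddCommMonoid M] (f : (Fin 3 → Bool) → M) :
    ∑ y, f y = ∑ p : Bool × Bool × Bool, f ![p.1, p.2.1, p.2.2] :=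
  (Fintype.sum_bijective (fun p : Bool × Bool × Bool => ![p.1, p.2.1, p.2.2])
    (by decide) _ _ (fun _ => rfl)).symm

noncomputable def myC : QAC (1 + 3 + 0) 2 where
  L := ![![Hm, 1, Hm, 1], ![1, 1, Hm, 1], ![Hm, 1, 1, 1]]
  hL := by
    intro i j
    fin_cases i <;> fin_cases j <;>
      first
        | exact Hm_unitary
        | exact Submonoid.one_mem _
  Z := ![[{0, 1}, {2, 3}], [{0, 2}]]
  hZ := by intro i; fin_cases i <;> simp <;> decide

def sgn (b : Bool) : ℂ := cond b (-1) 1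

noncomputable def st0 (x : Fin 3 → Bool) : QState 4 :=
  fun y => if y 0 = false ∧ y 1 = x 0 ∧ y 2 = x 1 ∧ y 3 = x 2 then 1 else 0
noncomputable def st1 (x : Fin 3 → Bool) : QState 4 :=
  fun y => if y 1 = x 0 ∧ y 3 = x 2 then (1/2) * sgn (y 2 && x 1) else 0
noncomputable def st2 (x : Fin 3 → Bool) : QState 4 :=
  fun y => if y 1 = x 0 ∧ y 3 = x 2 then
    (1/2) * sgn (y 2 && x 1) * sgn (y 0 && x 0) * sgn (y 2 && x 2) else 0
noncomputable def st3 (x : Fin 3 → Bool) : QState 4 :=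
  fun y => if y 1 = x 0 ∧ y 2 = (x 1 ^^ x 2) ∧ y 3 = x 2 then (cc:ℂ) * sgn (y 0 && x 0) else 0
noncomputable def st4 (x : Fin 3 → Bool) : QState 4 :=
  fun y => if y 1 = x 0 ∧ y 2 = (x 1 ^^ x 2) ∧ y 3 = x 2 then
    (cc:ℂ) * sgn (y 0 && (x 0 ^^ (x 1 ^^ x 2))) else 0
noncomputable def st5 (x : Fin 3 → Bool) : QState 4 :=
  fun y => if y 0 = (x 0 ^^ (x 1 ^^ x 2)) ∧ y 1 = x 0 ∧ y 2 = (x 1 ^^ x 2) ∧ y 3 = x 2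
    then 1 else 0

set_option maxHeartbeats 2000000

lemma step1 (x : Fin 3 → Bool) : layerAct ![Hm, 1, Hm, 1] (st0 x) = st1 x := by
  funext y
  rw [layerAct, sum_pi4]
  simp only [Fintype.sum_prod_type, Fintype.sum_bool, Fin.prod_univ_four,
    Matrix.cons_val_zero, Matrix.cons_val_one, Matrix.head_cons,
    Matrix.cons_val_two, Matrix.tail_cons, Matrix.cons_val_three, bitIdx, st0, st1,
    Bool.true_eq_false, false_and, if_false, if_true]
  cases h0 : y 0 <;> cases h1 : y 1 <;> cases h2 : y 2 <;> cases h3 : y 3 <;>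
  cases hx0 : x 0 <;> cases hx1 : x 1 <;> cases hx2 : x 2 <;>
    simp [sgn, h0, h1, h2, h3, hx0, hx1, hx2, Hm, Matrix.one_apply] <;>
    (try ring_nf) <;> simp [hcc2, hcc]

lemma step2 (x : Fin 3 → Bool) :
    czLayerAct [{0, 1}, {2, 3}] (st1 x) = st2 x := by
  funext y
  show czGate {0,1} (czGate {2,3} (st1 x)) y = st2 x y
  cases h0 : y 0 <;> cases h1 : y 1 <;> cases h2 : y 2 <;> cases h3 : y 3 <;>
  cases hx0 : x 0 <;> cases hx1 : x 1 <;> cases hx2 : x 2 <;>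
    simp [czGate, st1, st2, sgn, h0, h1, h2, h3, hx0, hx1, hx2, Fin.forall_fin_succ] <;> ring_nf

lemma step3 (x : Fin 3 → Bool) : layerAct ![1, 1, Hm, 1] (st2 x) = st3 x := by
  funext y
  rw [layerAct, sum_pi4]
  simp only [Fintype.sum_prod_type, Fintype.sum_bool, Fin.prod_univ_four,
    Matrix.cons_val_zero, Matrix.cons_val_one, Matrix.head_cons,
    Matrix.cons_val_two, Matrix.tail_cons, Matrix.cons_val_three, bitIdx, st2, st3,
    Bool.true_eq_false, false_and, if_false, if_true]
  cases h0 : y 0 <;> cases h1 : y 1 <;> cases h2 : y 2 <;> cases h3 : y 3 <;>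
  cases hx0 : x 0 <;> cases hx1 : x 1 <;> cases hx2 : x 2 <;>
    simp [sgn, h0, h1, h2, h3, hx0, hx1, hx2, Hm, Matrix.one_apply] <;> ring_nf

lemma step4 (x : Fin 3 → Bool) :
    czLayerAct [{0, 2}] (st3 x) = st4 x := by
  funext y
  show czGate {0,2} (st3 x) y = st4 x y
  cases h0 : y 0 <;> cases h1 : y 1 <;> cases h2 : y 2 <;> cases h3 : y 3 <;>
  cases hx0 : x 0 <;> cases hx1 : x 1 <;> cases hx2 : x 2 <;>
    simp [czGate, st3, st4, sgn, h0, h1, h2, h3, hx0, hx1, hx2] <;> ring_nf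

lemma step5 (x : Fin 3 → Bool) : layerAct ![Hm, 1, 1, 1] (st4 x) = st5 x := by
  funext y
  rw [layerAct, sum_pi4]
  simp only [Fintype.sum_prod_type, Fintype.sum_bool, Fin.prod_univ_four,
    Matrix.cons_val_zero, Matrix.cons_val_one, Matrix.head_cons,
    Matrix.cons_val_two, Matrix.tail_cons, Matrix.cons_val_three, bitIdx, st4, st5,
    Bool.true_eq_false, false_and, if_false, if_true]
  cases h0 : y 0 <;> cases h1 : y 1 <;> cases h2 : y 2 <;> cases h3 : y 3 <;>
  cases hx0 : x 0 <;> cases hx1 : x 1 <;> cases hx2 : x 2 <;>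
    simp [sgn, h0, h1, h2, h3, hx0, hx1, hx2, Hm, Matrix.one_apply] <;>
    (try ring_nf) <;> simp [hcc2, hcc] <;> ring_nf

lemma act_eq (x : Fin 3 → Bool) : myC.act (st0 x) = st5 x := by
  have h : myC.act (st0 x) =
      layerAct ![Hm, 1, 1, 1] (czLayerAct [{0, 2}]
        (layerAct ![1, 1, Hm, 1] (czLayerAct [{0, 1}, {2, 3}]
          (layerAct ![Hm, 1, Hm, 1] (st0 x))))) := rfl
  rw [h, step1, step2, step3, step4, step5]

lemma inState_eq (x : Fin 3 → Bool) : inState 3 0 false x (zeroAnc 0) = st0 x := by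
  funext y
  have h : (fun j : Fin 0 => y (anc 3 0 j)) = (fun _ => false) := funext fun j => j.elim0
  have h2 : (∀ i, y (inp 3 0 i) = x i) ↔ (y 1 = x 0 ∧ y 2 = x 1 ∧ y 3 = x 2) := by
    constructor
    · intro h; exact ⟨h 0, h 1, h 2⟩
    · rintro ⟨a, b, c⟩ i; fin_cases i <;> assumption
  have ht : tgt 3 0 = 0 := rfl
  simp [inState, zeroAnc, h, h2, ht, st0]

lemma parityB_eq (x : Fin 3 → Bool) : parityB x = (x 0 ^^ (x 1 ^^ x 2)) := by
  cases hx0 : x 0 <;> cases hx1 : x 1 <;> cases hx2 : x 2 <;>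
    simp only [parityB, Fin.sum_univ_three, hx0, hx1, hx2] <;> norm_num

noncomputable def phi (x : Fin 3 → Bool) : QState 3 :=
  fun z => if z 0 = x 0 ∧ z 1 = (x 1 ^^ x 2) ∧ z 2 = x 2 then 1 else 0

lemma unit_phi (x : Fin 3 → Bool) : UnitVec (phi x) := by
  rw [UnitVec, sum_pi3]
  cases hx0 : x 0 <;> cases hx1 : x 1 <;> cases hx2 : x 2 <;>
    simp [phi, Fintype.sum_prod_type, hx0, hx1, hx2] <;> norm_num

theorem depth_two_computes_parity_three_aux :
    ∃ C : QAC (1 + 3 + 0) 2, Computes 3 0 C := by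
  refine ⟨myC, ?_⟩
  intro x
  refine ⟨phi x, unit_phi x, ?_⟩
  intro y
  rw [inState_eq, act_eq, parityB_eq]
  have ht : tgt 3 0 = 0 := rfl
  have hn0 : nontgt 3 0 0 = 1 := rfl
  have hn1 : nontgt 3 0 1 = 2 := rfl
  have hn2 : nontgt 3 0 2 = 3 := rfl
  simp only [st5, phi, ht, hn0, hn1, hn2]
  by_cases h1 : y 0 = (x 0 ^^ (x 1 ^^ x 2)) <;>
  by_cases h2 : y 1 = x 0 ∧ y 2 = (x 1 ^^ x 2) ∧ y 3 = x 2 <;>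
    simp [h1, h2]

theorem depth_two_computes_parity_three :
    ∃ C : QAC (1 + 3 + 0) 2, Computes 3 0 C := depth_two_computes_parity_three_aux
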